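/- Let k be a field, n ≥ 2, λ₁,…,λₙ pairwise distinct nonzero elements of k, and X the 3-Kronecker representation (k^n, k^n; id, diag(λᵢ), cyclic shift). Let a be a natural number and let W be a subrepresentation of X^a whose dimension vector equals (w, w) for some w. Then W is isomorphic as a representation to X^s for some natural number s, and w = s·n. -/

import Mathlib

/- Lemma 2: any subrepresentation W of X^a with dimension vector (w,w) is
   isomorphic to X^s for some s (and then w = s·n), where
   X = (k^n, k^n; id, diag(λᵢ), cyclic shift). -/

def kroneckerBeta (k : Type) [Field k] (n : ℕ) (l : Fin n → k) :
    (Fin n → k) →ₗ[k] (Fin n → k) where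
  toFun v i := l i * v i
  map_add' u v := by funext i; simp [mul_add]
  map_smul' c v := by funext i; simp; ring

def kroneckerGamma (k : Type) [Field k] (n : ℕ) :
    (Fin n → k) →ₗ[k] (Fin n → k) where
  toFun v i := v ((finRotate n).symm i)
  map_add' u v := rfl
  map_smul' c v := rfl

/-- The structure map of X^a induced componentwise by a map of X. -/
def powMap (k : Type) [Field k] (n : ℕ) (a : ℕ) (f : (Fin n → k) →ₗ[k] (Fin n → k)) :
    (Fin a → Fin n → k) →ₗ[k] (Fin a → Fin n → k) :=
  LinearMap.pi fun j => f.comp (LinearMap.proj j)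

open Fin.NatCast Fin.CommRing

namespace KronAux

variable {k : Type} [Field k] {n a : ℕ}

lemma pm_apply (f : (Fin n → k) →ₗ[k] (Fin n → k)) (x : Fin a → Fin n → k)
    (j : Fin a) : powMap k n a f x j = f (x j) := rfl

lemma finRotate_symm_apply [NeZero n] (m : Fin n) : (finRotate n).symm m = m - 1 := by
  obtain ⟨n', rfl⟩ := Nat.exists_eq_succ_of_ne_zero (NeZero.ne n)
  apply (finRotate _).injective
  simp [finRotate_succ_apply]

lemma Cpow_apply [NeZero n] (t : ℕ) (x : Fin a → Fin n → k) (j : Fin a) (m : Fin n) :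
    ((powMap k n a (kroneckerGamma k n)) ^ t) x j m = x j (m - (t : Fin n)) := by
  induction t generalizing m with
  | zero => simp
  | succ t ih =>
      rw [pow_succ', Module.End.mul_apply, pm_apply]
      show ((powMap k n a (kroneckerGamma k n)) ^ t) x j ((finRotate n).symm m) = _
      rw [ih, finRotate_symm_apply]
      congr 1
      push_cast
      ring

lemma Cpow_cast [NeZero n] {t t' : ℕ} (h : (t : Fin n) = (t' : Fin n))
    (x : Fin a → Fin n → k) :
    ((powMap k n a (kroneckerGamma k n)) ^ t) x
      = ((powMap k n a (kroneckerGamma k n)) ^ t') x := by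
  funext j m; rw [Cpow_apply, Cpow_apply, h]

lemma Cpow_n [NeZero n] (x : Fin a → Fin n → k) :
    ((powMap k n a (kroneckerGamma k n)) ^ n) x = x := by
  funext j m; rw [Cpow_apply]; simp

/-- supported on column `p` -/
def Supp (p : Fin n) (x : Fin a → Fin n → k) : Prop := ∀ j m, m ≠ p → x j m = 0

lemma supp_Cpow [NeZero n] {p : Fin n} {x : Fin a → Fin n → k} (h : Supp p x) (t : ℕ) :
    Supp (p + (t : Fin n)) (((powMap k n a (kroneckerGamma k n)) ^ t) x) := by
  intro j m hm
  rw [Cpow_apply]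
  apply h
  intro e
  apply hm
  rw [← e]; abel

lemma beta_of_supp {l : Fin n → k} {p : Fin n} {x : Fin a → Fin n → k} (h : Supp p x) :
    powMap k n a (kroneckerBeta k n l) x = l p • x := by
  funext j m
  show l m * x j m = l p * x j m
  by_cases hm : m = p
  · rw [hm]
  · rw [h j m hm, mul_zero, mul_zero]

/-- column-p supported vectors as a submodule -/
def Esub (k : Type) [Field k] (n a : ℕ) (p : Fin n) :
    Submodule k (Fin a → Fin n → k) where
  carrier := {x | Supp p x}
  zero_mem' := fun _ _ _ => rfl
  add_mem' := fun hx hy j m hm => by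
    show _ + _ = (0:k)
    rw [hx j m hm, hy j m hm, add_zero]
  smul_mem' := fun c x hx j m hm => by
    show c * _ = (0:k)
    rw [hx j m hm, mul_zero]

/-- projection to column i -/
def Pl (k : Type) [Field k] (n a : ℕ) (i : Fin n) :
    (Fin a → Fin n → k) →ₗ[k] (Fin a → Fin n → k) where
  toFun x j m := if m = i then x j m else 0
  map_add' x y := by funext j m; by_cases hm : m = i <;> simp [hm]
  map_smul' c x := by funext j m; by_cases hm : m = i <;> simp [hm]

lemma supp_Pl (i : Fin n) (x : Fin a → Fin n → k) : Supp i (Pl k n a i x) := by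
  intro j m hm; simp [Pl, hm]

lemma Pl_of_supp {p i : Fin n} {x : Fin a → Fin n → k} (h : Supp p x) :
    Pl k n a i x = if p = i then x else 0 := by
  funext j m
  by_cases hp : p = i
  · rw [if_pos hp]
    subst hp
    show (if m = p then x j m else 0) = x j m
    by_cases hm : m = p
    · rw [if_pos hm]
    · rw [if_neg hm, h j m hm]
  · rw [if_neg hp]
    show (if m = i then x j m else 0) = (0 : Fin a → Fin n → k) j m
    by_cases hm : m = i
    · rw [if_pos hm]
      refine (h j m ?_).trans rfl
      rw [hm]; exact fun e => hp e.symm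
    · rw [if_neg hm]; rfl

lemma sum_Pl (x : Fin a → Fin n → k) : ∑ i, Pl k n a i x = x := by
  funext j m
  rw [Finset.sum_apply, Finset.sum_apply]
  show (∑ i, if m = i then x j m else 0) = x j m
  simp

variable {W : Submodule k (Fin a → Fin n → k)} {l : Fin n → k}

lemma scale_mem (hB : ∀ x ∈ W, powMap k n a (kroneckerBeta k n l) x ∈ W)
    (S : Finset (Fin n)) {x : Fin a → Fin n → k} (hx : x ∈ W) :
    (fun j m => (∏ t ∈ S, (l m - l t)) * x j m) ∈ W := by
  classical
  induction S using Finset.induction_on with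
  | empty => simpa using hx
  | @insert c S hc ih =>
      have key : (fun j m => (∏ t ∈ insert c S, (l m - l t)) * x j m)
          = powMap k n a (kroneckerBeta k n l) (fun j m => (∏ t ∈ S, (l m - l t)) * x j m)
            - l c • (fun j m => (∏ t ∈ S, (l m - l t)) * x j m) := by
        funext j m
        show _ = l m * (_ * x j m) - l c * (_ * x j m)
        rw [Finset.prod_insert hc]
        ring
      rw [key]
      exact Submodule.sub_mem W (hB _ ih) (Submodule.smul_mem W _ ih)

lemma Pl_mem (hinj : Function.Injective l)
    (hB : ∀ x ∈ W, powMap k n a (kroneckerBeta k n l) x ∈ W)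
    (i : Fin n) {x : Fin a → Fin n → k} (hx : x ∈ W) : Pl k n a i x ∈ W := by
  classical
  set c : k := ∏ t ∈ Finset.univ.erase i, (l i - l t) with hc
  have hc0 : c ≠ 0 := by
    apply Finset.prod_ne_zero_iff.2
    intro t ht
    have : t ≠ i := Finset.ne_of_mem_erase ht
    exact sub_ne_zero.2 fun e => this (hinj e.symm)
  have key : Pl k n a i x
      = c⁻¹ • (fun j m => (∏ t ∈ Finset.univ.erase i, (l m - l t)) * x j m) := by
    funext j m
    simp only [Pl, LinearMap.coe_mk, AddHom.coe_mk, Pi.smul_apply, smul_eq_mul]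
    by_cases hm : m = i
    · subst hm
      rw [if_pos rfl, ← hc, inv_mul_cancel_left₀ hc0]
    · rw [if_neg hm,
        Finset.prod_eq_zero (Finset.mem_erase.2 ⟨hm, Finset.mem_univ m⟩) (sub_self (l m)),
        zero_mul, mul_zero]
  rw [key]
  exact Submodule.smul_mem W _ (scale_mem hB _ hx)

lemma Cpow_mem (hC : ∀ x ∈ W, powMap k n a (kroneckerGamma k n) x ∈ W)
    (t : ℕ) {x : Fin a → Fin n → k} (hx : x ∈ W) :
    ((powMap k n a (kroneckerGamma k n)) ^ t) x ∈ W := by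
  induction t generalizing x with
  | zero => simpa using hx
  | succ t ih =>
      rw [pow_succ, Module.End.mul_apply]
      exact ih (hC x hx)

end KronAux

theorem stmt2 (k : Type) [Field k] (n : ℕ) (hn : 2 ≤ n) (l : Fin n → k)
    (hne : ∀ i, l i ≠ 0) (hinj : Function.Injective l)
    (a : ℕ) (W₁ W₂ : Submodule k (Fin a → Fin n → k)) (w : ℕ)
    (hα : ∀ x ∈ W₁, x ∈ W₂)
    (hβ : ∀ x ∈ W₁, powMap k n a (kroneckerBeta k n l) x ∈ W₂)
    (hγ : ∀ x ∈ W₁, powMap k n a (kroneckerGamma k n) x ∈ W₂)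
    (hd1 : Module.finrank k W₁ = w) (hd2 : Module.finrank k W₂ = w) :
    ∃ s : ℕ, w = s * n ∧
      ∃ (e₁ : W₁ ≃ₗ[k] (Fin s → Fin n → k)) (e₂ : W₂ ≃ₗ[k] (Fin s → Fin n → k)),
        ∀ x : W₁,
          e₂ ⟨x.1, hα x.1 x.2⟩ = e₁ x ∧
          e₂ ⟨powMap k n a (kroneckerBeta k n l) x.1, hβ x.1 x.2⟩ =
            powMap k n s (kroneckerBeta k n l) (e₁ x) ∧
          e₂ ⟨powMap k n a (kroneckerGamma k n) x.1, hγ x.1 x.2⟩ =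
            powMap k n s (kroneckerGamma k n) (e₁ x) := by
  classical
  have hnz : NeZero n := ⟨by omega⟩
  have hW : W₂ = W₁ := by
    refine (Submodule.eq_of_le_of_finrank_le (fun x hx => hα x hx) ?_).symm
    rw [hd1, hd2]
  subst hW
  set C : (Fin a → Fin n → k) →ₗ[k] (Fin a → Fin n → k) :=
    powMap k n a (kroneckerGamma k n) with hCdef
  set W₀ : Submodule k (Fin a → Fin n → k) := W₂ ⊓ KronAux.Esub k n a 0 with hW₀def
  set s : ℕ := Module.finrank k ↥W₀ with hsdef
  set v : Module.Basis (Fin s) k ↥W₀ := Module.finBasis k ↥W₀ with hvdef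
  set bval : Fin s × Fin n → (Fin a → Fin n → k) :=
    fun p => (C ^ (p.2 : ℕ)) ((v p.1 : ↥W₀) : Fin a → Fin n → k) with hbvaldef
  have hv0 : ∀ j : Fin s, KronAux.Supp (0 : Fin n) ((v j : ↥W₀) : Fin a → Fin n → k) :=
    fun j => (v j).2.2
  have hvW : ∀ j : Fin s, ((v j : ↥W₀) : Fin a → Fin n → k) ∈ W₂ := fun j => (v j).2.1
  have hbs : ∀ p : Fin s × Fin n, KronAux.Supp p.2 (bval p) := by
    intro p
    have h := KronAux.supp_Cpow (hv0 p.1) (p.2 : ℕ)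
    rwa [zero_add, Fin.cast_val_eq_self] at h
  have hbm : ∀ p : Fin s × Fin n, bval p ∈ W₂ :=
    fun p => KronAux.Cpow_mem hγ _ (hvW p.1)
  have hcast : ∀ i : Fin n, ((n - (i : ℕ) : ℕ) : Fin n) = -(i : Fin n) := by
    intro i
    rw [Nat.cast_sub i.isLt.le, Fin.natCast_self, Fin.cast_val_eq_self, zero_sub]
  have hCinv : ∀ (i : Fin n) (z : Fin a → Fin n → k),
      (C ^ ((i : ℕ))) ((C ^ (n - (i : ℕ))) z) = z := by
    intro i z
    rw [← Module.End.mul_apply, ← pow_add, Nat.add_sub_cancel' i.isLt.le, hCdef,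
      KronAux.Cpow_n]
  have hext : ∀ (i : Fin n) (p : Fin s × Fin n),
      KronAux.Pl k n a 0 ((C ^ (n - (i : ℕ))) (bval p)) =
        if p.2 = i then ((v p.1 : ↥W₀) : Fin a → Fin n → k) else 0 := by
    intro i p
    have hsupp := KronAux.supp_Cpow (hbs p) (n - (i : ℕ))
    rw [hcast i] at hsupp
    by_cases h : p.2 = i
    · rw [if_pos h]
      have h1 : (C ^ (n - (i : ℕ))) (bval p) = ((v p.1 : ↥W₀) : Fin a → Fin n → k) := by
        rw [← h]
        show (C ^ (n - ((p.2 : ℕ)))) ((C ^ ((p.2 : ℕ))) ((v p.1 : ↥W₀) : Fin a → Fin n → k)) = _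
        rw [← Module.End.mul_apply, ← pow_add, Nat.sub_add_cancel p.2.isLt.le, hCdef,
          KronAux.Cpow_n]
      rw [h1, KronAux.Pl_of_supp (hv0 p.1), if_pos rfl]
    · rw [if_neg h, KronAux.Pl_of_supp hsupp, if_neg]
      intro e
      exact h (by rwa [add_neg_eq_zero] at e)
  -- linear independence
  have hli : LinearIndependent k bval := by
    rw [Fintype.linearIndependent_iff]
    intro g hg p
    obtain ⟨j, i⟩ := p
    set R : (Fin a → Fin n → k) →ₗ[k] (Fin a → Fin n → k) :=
      (KronAux.Pl k n a 0) ∘ₗ (C ^ (n - (i : ℕ))) with hRdef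
    have h2 : ∑ q : Fin s × Fin n, g q • R (bval q) = 0 := by
      simp_rw [← map_smul, ← map_sum, hg, map_zero]
    have hR : ∀ q : Fin s × Fin n,
        R (bval q) = if q.2 = i then ((v q.1 : ↥W₀) : Fin a → Fin n → k) else 0 :=
      fun q => hext i q
    simp_rw [hR, smul_ite, smul_zero] at h2
    rw [Fintype.sum_prod_type] at h2
    simp_rw [Finset.sum_ite_eq' Finset.univ i, Finset.mem_univ, if_true] at h2
    have h3 : ((∑ j' : Fin s, g (j', i) • v j' : ↥W₀) : Fin a → Fin n → k) = 0 := by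
      push_cast
      exact h2
    have h4 : (∑ j' : Fin s, g (j', i) • v j' : ↥W₀) = 0 := Subtype.ext h3
    exact Fintype.linearIndependent_iff.1 v.linearIndependent (fun j' => g (j', i)) h4 j
  -- spanning
  have hspan : Submodule.span k (Set.range bval) = W₂ := by
    apply le_antisymm
    · rw [Submodule.span_le]
      rintro _ ⟨p, rfl⟩
      exact hbm p
    · intro x hx
      rw [← KronAux.sum_Pl (k := k) (n := n) (a := a) x]
      apply Submodule.sum_mem
      intro i _
      have hyW : (C ^ (n - (i : ℕ))) (KronAux.Pl k n a i x) ∈ W₂ :=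
        KronAux.Cpow_mem hγ _ (KronAux.Pl_mem hinj hβ i hx)
      have hysupp : KronAux.Supp (0 : Fin n) ((C ^ (n - (i : ℕ))) (KronAux.Pl k n a i x)) := by
        have h := KronAux.supp_Cpow (KronAux.supp_Pl i x) (n - (i : ℕ))
        rwa [hcast i, add_neg_cancel] at h
      have hyW0 : (C ^ (n - (i : ℕ))) (KronAux.Pl k n a i x) ∈ W₀ := ⟨hyW, hysupp⟩
      have hPy : KronAux.Pl k n a i x =
          (C ^ ((i : ℕ))) ((C ^ (n - (i : ℕ))) (KronAux.Pl k n a i x)) := (hCinv i _).symm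
      rw [hPy]
      have hrepr : ((∑ j : Fin s, v.repr ⟨_, hyW0⟩ j • v j : ↥W₀) : Fin a → Fin n → k)
          = (C ^ (n - (i : ℕ))) (KronAux.Pl k n a i x) := by rw [Module.Basis.sum_repr]
      rw [← hrepr]
      push_cast
      rw [map_sum]
      apply Submodule.sum_mem
      intro j _
      rw [map_smul]
      exact Submodule.smul_mem _ _ (Submodule.subset_span ⟨(j, i), rfl⟩)
  -- the basis of W₂
  set b : Module.Basis (Fin s × Fin n) k ↥W₂ :=
    (Module.Basis.span hli).map (LinearEquiv.ofEq _ _ hspan) with hbdef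
  have hb : ∀ p, (b p : Fin a → Fin n → k) = bval p := by
    intro p
    rw [hbdef, Module.Basis.map_apply]
    show ((LinearEquiv.ofEq _ _ hspan) (Module.Basis.span hli p) : Fin a → Fin n → k) = _
    rw [LinearEquiv.coe_ofEq_apply, Module.Basis.span_apply]
  have hw : w = s * n := by
    rw [← hd2, Module.finrank_eq_card_basis b, Fintype.card_prod, Fintype.card_fin,
      Fintype.card_fin]
  set e₁ : ↥W₂ ≃ₗ[k] (Fin s → Fin n → k) :=
    b.equivFun.trans (LinearEquiv.curry k k (Fin s) (Fin n)) with he₁def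
  have he₁ : ∀ p, e₁ (b p) = fun j i => if p = (j, i) then (1 : k) else 0 := by
    intro p
    funext j i
    show b.equivFun (b p) (j, i) = _
    rw [Module.Basis.equivFun_self]
  set Bmap : (Fin a → Fin n → k) →ₗ[k] (Fin a → Fin n → k) :=
    powMap k n a (kroneckerBeta k n l) with hBdef
  set BW : ↥W₂ →ₗ[k] ↥W₂ := Bmap.restrict hβ with hBWdef
  set CW : ↥W₂ →ₗ[k] ↥W₂ := C.restrict hγ with hCWdef
  have hkey2 : e₁.toLinearMap ∘ₗ BW
      = (powMap k n s (kroneckerBeta k n l)) ∘ₗ e₁.toLinearMap := by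
    apply b.ext
    intro p
    simp only [LinearMap.comp_apply, LinearEquiv.coe_coe]
    have h1 : BW (b p) = l p.2 • b p := by
      apply Subtype.ext
      show Bmap ((b p : Fin a → Fin n → k)) = ((l p.2 • b p : ↥W₂) : Fin a → Fin n → k)
      rw [SetLike.val_smul, hb p, hBdef, KronAux.beta_of_supp (hbs p)]
    rw [h1, map_smul, he₁ p]
    funext j i
    show l p.2 * (if p = (j, i) then (1:k) else 0)
        = l i * (if p = (j, i) then (1:k) else 0)
    by_cases h : p = (j, i)
    · rw [h]
    · rw [if_neg h, mul_zero, mul_zero]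
  have hkey3 : e₁.toLinearMap ∘ₗ CW
      = (powMap k n s (kroneckerGamma k n)) ∘ₗ e₁.toLinearMap := by
    apply b.ext
    intro p
    simp only [LinearMap.comp_apply, LinearEquiv.coe_coe]
    have h1 : CW (b p) = b (p.1, p.2 + 1) := by
      apply Subtype.ext
      show C ((b p : Fin a → Fin n → k)) = ((b (p.1, p.2 + 1) : ↥W₂) : Fin a → Fin n → k)
      rw [hb p, hb (p.1, p.2 + 1)]
      have h2 : C ((C ^ ((p.2 : ℕ))) ((v p.1 : ↥W₀) : Fin a → Fin n → k))
          = (C ^ ((p.2 : ℕ) + 1)) ((v p.1 : ↥W₀) : Fin a → Fin n → k) := by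
        rw [pow_succ', Module.End.mul_apply]
      show C ((C ^ ((p.2 : ℕ))) ((v p.1 : ↥W₀) : Fin a → Fin n → k))
          = (C ^ (((p.2 + 1 : Fin n) : ℕ))) ((v p.1 : ↥W₀) : Fin a → Fin n → k)
      rw [h2, hCdef]
      apply KronAux.Cpow_cast
      push_cast [Fin.cast_val_eq_self]
      ring
    rw [h1, he₁, he₁ p]
    funext j i
    show (if (p.1, p.2 + 1) = (j, i) then (1:k) else 0)
        = (fun j i => if p = (j, i) then (1:k) else 0) j ((finRotate n).symm i)
    rw [KronAux.finRotate_symm_apply]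
    show _ = (if p = (j, i - 1) then (1:k) else 0)
    refine if_congr ?_ rfl rfl
    rcases p with ⟨pj, pi⟩
    simp only [Prod.mk.injEq]
    exact and_congr_right fun _ => (eq_sub_iff_add_eq).symm
  refine ⟨s, hw, e₁, e₁, fun x => ⟨rfl, ?_, ?_⟩⟩
  · have h := LinearMap.congr_fun hkey2 x
    simp only [LinearMap.comp_apply, LinearEquiv.coe_coe] at h
    exact h
  · have h := LinearMap.congr_fun hkey3 x
    simp only [LinearMap.comp_apply, LinearEquiv.coe_coe] at h
    exact h
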